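/- For every integer x ≥ 1, the three-task vector k = (2, 3, x) is not pinwheel-schedulable; that is, there is no schedule σ : ℕ → Option (Fin 3) such that task 0 occurs in every window of 2 consecutive slots, task 1 occurs in every window of 3 consecutive slots, and task 2 occurs in every window of x consecutive slots. -/
import Mathlib


/-- For every integer `x ≥ 1`, the three-task vector `k = (2, 3, x)` is
not pinwheel-schedulable: there is no schedule `σ : ℕ → Option (Fin 3)` such that
task 0 occurs in every window of 2 consecutive slots, task 1 in every window of 3
consecutive slots, and task 2 in every window of `x` consecutive slots. -/
theorem two_three_x_not_schedulable (x : ℕ) (hx : 1 ≤ x) :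
    ¬ ∃ σ : ℕ → Option (Fin 3),
        (∀ t : ℕ, ∃ s, t ≤ s ∧ s < t + 2 ∧ σ s = some 0) ∧
        (∀ t : ℕ, ∃ s, t ≤ s ∧ s < t + 3 ∧ σ s = some 1) ∧
        (∀ t : ℕ, ∃ s, t ≤ s ∧ s < t + x ∧ σ s = some 2) := by
  rintro ⟨σ, h0, h1, h2⟩
  obtain ⟨s, hs1, hsx, hs2⟩ := h2 1
  obtain ⟨a, ha1, ha2, ha0⟩ := h0 s
  have has : a = s + 1 := by
    rcases (by omega : a = s ∨ a = s + 1) with h | h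
    · exfalso; rw [h, hs2] at ha0; simp at ha0
    · exact h
  rw [has] at ha0
  obtain ⟨b, hb1, hb2, hb0⟩ := h0 (s - 1)
  have hbs : b = s - 1 := by
    rcases (by omega : b = s - 1 ∨ b = s) with h | h
    · exact h
    · exfalso; rw [h, hs2] at hb0; simp at hb0
  rw [hbs] at hb0
  obtain ⟨c, hc1, hc2, hc⟩ := h1 (s - 1)
  rcases (by omega : c = s - 1 ∨ c = s ∨ c = s + 1) with h | h | h <;> rw [h] at hc
  · rw [hb0] at hc; simp at hc
  · rw [hs2] at hc; simp at hc
  · rw [ha0] at hc; simp at hc
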